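/- Let X_j ~ N(θ_j, σ²) independently for j=1,...,d with at most s nonzero θ_j, each nonzero θ_j ≥ a. Suppose the conditions a/σ ≥ Φ⁻¹(δ) − Φ⁻¹(α'/s) and Φ⁻¹(α'/s) + a/σ ≤ u with u = Φ⁻¹(1 − (α−α')/d) hold, where 0 < α' < α < 1. Define Ŝ = {j : X_j/σ ≥ max(Φ⁻¹(α'/s) + a/σ, Φ⁻¹(δ))} and L_j = max(X_j − uσ, 0) for j ∈ Ŝ, L_j = 0 otherwise. Then P(∃ j : θ_j < L_j or (θ_j ≠ 0 and j ∉ Ŝ)) ≤ α. -/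

import Mathlib

open MeasureTheory ProbabilityTheory Real Set Filter

/-- The standard normal CDF. -/
noncomputable def Phi (y : ℝ) : ℝ := ((gaussianReal 0 1) (Set.Iic y)).toReal

/-- The standard normal quantile function (inverse CDF). -/
noncomputable def PhiInv : ℝ → ℝ := Function.invFun Phi

lemma Phi_eq_integral (y : ℝ) : Phi y = ∫ x in Iic y, gaussianPDFReal 0 1 x := by
  rw [Phi, gaussianReal_apply_eq_integral 0 one_ne_zero, ENNReal.toReal_ofReal]
  exact integral_nonneg fun x => gaussianPDFReal_nonneg 0 1 x

lemma continuous_Phi : Continuous Phi := by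
  have hint : Integrable (gaussianPDFReal 0 1) := integrable_gaussianPDFReal 0 1
  have h : Phi = fun y => Phi 0 + ∫ x in (0:ℝ)..y, gaussianPDFReal 0 1 x := by
    funext y
    rw [Phi_eq_integral, Phi_eq_integral,
      ← intervalIntegral.integral_Iic_sub_Iic hint.integrableOn hint.integrableOn]
    ring
  rw [h]
  exact continuous_const.add
    (intervalIntegral.continuous_primitive (fun a b => hint.intervalIntegrable) 0)

lemma tendsto_Phi_atTop : Tendsto Phi atTop (nhds 1) := by
  have h := tendsto_measure_Iic_atTop (gaussianReal 0 1)
  rw [measure_univ] at h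
  have h2 := (ENNReal.tendsto_toReal ENNReal.one_ne_top).comp h
  exact h2

lemma tendsto_Phi_atBot : Tendsto Phi atBot (nhds 0) := by
  have hI : ⋂ y : ℝ, Iic y = (∅ : Set ℝ) := by
    ext x
    simp only [mem_iInter, mem_Iic, mem_empty_iff_false, iff_false, not_forall]
    exact ⟨x - 1, by linarith⟩
  have h := tendsto_measure_iInter_atBot (μ := gaussianReal 0 1)
    (s := fun y : ℝ => Iic y) (fun y => measurableSet_Iic.nullMeasurableSet)
    (fun _ _ hxy => Iic_subset_Iic.2 hxy) ⟨0, measure_ne_top _ _⟩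
  rw [hI, measure_empty] at h
  have h2 := (ENNReal.tendsto_toReal ENNReal.zero_ne_top).comp h
  exact h2

lemma monotone_Phi : Monotone Phi := fun x y hxy =>
  ENNReal.toReal_mono (measure_ne_top _ _) (measure_mono (Iic_subset_Iic.2 hxy))

lemma Phi_PhiInv {p : ℝ} (hp0 : 0 < p) (hp1 : p < 1) : Phi (PhiInv p) = p := by
  have ha : ∃ a, Phi a < p := (tendsto_Phi_atBot.eventually_lt_const hp0).exists
  have hb : ∃ b, p < Phi b := (tendsto_Phi_atTop.eventually_const_lt hp1).exists
  obtain ⟨a, ha⟩ := ha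
  obtain ⟨b, hb⟩ := hb
  have hab : a ≤ b := by
    by_contra hc
    exact absurd (monotone_Phi (le_of_not_ge hc)) (by linarith)
  have := intermediate_value_Icc hab continuous_Phi.continuousOn
  have hmem : p ∈ Icc (Phi a) (Phi b) := ⟨le_of_lt ha, le_of_lt hb⟩
  obtain ⟨c, _, hc⟩ := this hmem
  exact Function.invFun_eq ⟨c, hc⟩

lemma gaussianReal_Iic_toReal (m c : ℝ) {σ : ℝ} (hσ : 0 < σ) :
    ((gaussianReal m (σ ^ 2).toNNReal) (Iic c)).toReal = Phi ((c - m) / σ) := by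
  have hmap : (gaussianReal m ((σ ^ 2).toNNReal))
      = ((gaussianReal 0 1).map (σ * ·)).map (· + m) := by
    rw [gaussianReal_map_const_mul, gaussianReal_map_add_const, mul_zero, zero_add]
    congr 1
    rw [← NNReal.coe_inj]
    simp [Real.coe_toNNReal _ (sq_nonneg σ)]
  rw [hmap, Measure.map_apply (measurable_id'.add_const m) measurableSet_Iic,
    Measure.map_apply (measurable_id'.const_mul σ) (measurableSet_Iic.preimage
      (measurable_id'.add_const m))]
  have hset : (σ * ·) ⁻¹' ((· + m) ⁻¹' Iic c) = Iic ((c - m) / σ) := by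
    ext x
    simp only [mem_preimage, mem_Iic]
    rw [le_div_iff₀ hσ]
    constructor <;> intro h <;> nlinarith
  rw [hset, Phi]

lemma gaussianReal_Ioi_toReal (m c : ℝ) {σ : ℝ} (hσ : 0 < σ) :
    ((gaussianReal m (σ ^ 2).toNNReal) (Ioi c)).toReal = 1 - Phi ((c - m) / σ) := by
  have h := measure_add_measure_compl (μ := gaussianReal m (σ ^ 2).toNNReal)
    (measurableSet_Iic (a := c))
  rw [compl_Iic, measure_univ] at h
  have h2 : ((gaussianReal m (σ ^ 2).toNNReal) (Iic c)).toReal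
      + ((gaussianReal m (σ ^ 2).toNNReal) (Ioi c)).toReal = 1 := by
    rw [← ENNReal.toReal_add (measure_ne_top _ _) (measure_ne_top _ _), h, ENNReal.toReal_one]
  rw [gaussianReal_Iic_toReal m c hσ] at h2
  linarith

/-- Coverage of the one-sided sparse confidence set in the low-SNR regime: with
`X_j ~ N(θ_j, σ²)` independent, at most `s` nonzero `θ_j`, each nonzero `θ_j ≥ a`,
`a/σ ≥ Φ⁻¹(δ) − Φ⁻¹(α'/s)` and `Φ⁻¹(α'/s) + a/σ ≤ u` where
`u = Φ⁻¹(1 − (α−α')/d)`, the sparse confidence set with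
`Ŝ = {j : X_j/σ ≥ max(Φ⁻¹(α'/s) + a/σ, Φ⁻¹(δ))}` and lower bounds
`L_j = max(X_j − uσ, 0)` on `Ŝ` (and `0` off `Ŝ`) fails to cover `θ` with probability
at most `α`. -/
theorem sparse_ci_coverage {Ω : Type*} [MeasurableSpace Ω] (μ : Measure Ω)
    [IsProbabilityMeasure μ] (d s : ℕ) (hd : 1 ≤ d) (hs : 1 ≤ s)
    (σ a δ α α' : ℝ) (hσ : 0 < σ) (ha : 0 < a)
    (hδ0 : 0 < δ) (hδ1 : δ < 1) (hα'0 : 0 < α') (hα'α : α' < α) (hα1 : α < 1)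
    (θ : Fin d → ℝ) (X : Fin d → Ω → ℝ)
    (hmeas : ∀ j, Measurable (X j))
    (hlaw : ∀ j, μ.map (X j) = gaussianReal (θ j) (σ ^ 2).toNNReal)
    (hind : iIndepFun X μ)
    (hsupp : (Finset.univ.filter (fun j => θ j ≠ 0)).card ≤ s)
    (hsig : ∀ j, θ j ≠ 0 → a ≤ θ j)
    (hsnr : PhiInv δ - PhiInv (α' / s) ≤ a / σ)
    (hlow : PhiInv (α' / s) + a / σ ≤ PhiInv (1 - (α - α') / d)) :
    (μ {ω | ∃ j,
        θ j < (if max (PhiInv (α' / s) + a / σ) (PhiInv δ) ≤ X j ω / σ then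
            max (X j ω - PhiInv (1 - (α - α') / d) * σ) 0 else 0)
        ∨ (θ j ≠ 0 ∧
            ¬ max (PhiInv (α' / s) + a / σ) (PhiInv δ) ≤ X j ω / σ)}).toReal ≤ α := by
  classical
  set u := PhiInv (1 - (α - α') / d) with hu
  set q := PhiInv (α' / s) with hq
  have hd0 : (0:ℝ) < d := by exact_mod_cast Nat.lt_of_lt_of_le Nat.zero_lt_one hd
  have hs0 : (0:ℝ) < s := by exact_mod_cast Nat.lt_of_lt_of_le Nat.zero_lt_one hs
  have hd1 : (1:ℝ) ≤ d := by exact_mod_cast hd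
  have hs1 : (1:ℝ) ≤ s := by exact_mod_cast hs
  have hαα' : 0 < α - α' := by linarith
  have he1 : (α - α') / d ≤ α - α' := div_le_self (le_of_lt hαα') hd1
  have hud : 0 < (α - α') / d := div_pos hαα' hd0
  have hPu : Phi u = 1 - (α - α') / d := Phi_PhiInv (by linarith) (by linarith)
  have hqs1 : α' / s ≤ α' := div_le_self (le_of_lt hα'0) hs1
  have hPq : Phi q = α' / s := Phi_PhiInv (div_pos hα'0 hs0) (by linarith)
  set A : Fin d → Set Ω := fun j => {ω | θ j + u * σ < X j ω} with hA
  set B : Fin d → Set Ω := fun j =>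
    if θ j = 0 then (∅ : Set Ω) else {ω | X j ω ≤ θ j + q * σ} with hB
  have hθ0 : ∀ j, 0 ≤ θ j := by
    intro j
    by_cases h : θ j = 0
    · simp [h]
    · linarith [hsig j h]
  have hmuA : ∀ j, (μ (A j)).toReal = (α - α') / d := by
    intro j
    have hm : μ (A j) = (μ.map (X j)) (Ioi (θ j + u * σ)) := by
      rw [Measure.map_apply (hmeas j) measurableSet_Ioi]
      rfl
    rw [hm, hlaw j, gaussianReal_Ioi_toReal _ _ hσ]
    have hc : (θ j + u * σ - θ j) / σ = u := by field_simp; ring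
    rw [hc, hPu]
    ring
  have hmuB : ∀ j, (μ (B j)).toReal = if θ j = 0 then 0 else α' / s := by
    intro j
    by_cases h : θ j = 0
    · simp [hB, h]
    · rw [hB]
      simp only [if_neg h]
      have hm : μ {ω | X j ω ≤ θ j + q * σ} = (μ.map (X j)) (Iic (θ j + q * σ)) := by
        rw [Measure.map_apply (hmeas j) measurableSet_Iic]
        rfl
      rw [hm, hlaw j, gaussianReal_Iic_toReal _ _ hσ]
      have hc : (θ j + q * σ - θ j) / σ = q := by field_simp; ring
      rw [hc, hPq]
  have hincl : {ω | ∃ j,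
      θ j < (if max (q + a / σ) (PhiInv δ) ≤ X j ω / σ then
          max (X j ω - u * σ) 0 else 0)
      ∨ (θ j ≠ 0 ∧ ¬ max (q + a / σ) (PhiInv δ) ≤ X j ω / σ)} ⊆ ⋃ j, A j ∪ B j := by
    rintro ω ⟨j, hj⟩
    refine mem_iUnion.2 ⟨j, ?_⟩
    rcases hj with h1 | ⟨hθ, h2⟩
    · by_cases hc : max (q + a / σ) (PhiInv δ) ≤ X j ω / σ
      · rw [if_pos hc] at h1
        left
        rcases lt_max_iff.mp h1 with h | h
        · exact (by linarith : θ j + u * σ < X j ω)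
        · exact absurd h (not_lt.2 (hθ0 j))
      · rw [if_neg hc] at h1
        exact absurd h1 (not_lt.2 (hθ0 j))
    · right
      rw [hB]
      simp only [if_neg hθ]
      have hmax : max (q + a / σ) (PhiInv δ) = q + a / σ := max_eq_left (by linarith [hsnr])
      rw [hmax] at h2
      push_neg at h2
      have hXlt : X j ω < (q + a / σ) * σ := (div_lt_iff₀ hσ).mp h2
      have hqa : (q + a / σ) * σ = q * σ + a := by field_simp
      have haθ := hsig j hθ
      show X j ω ≤ θ j + q * σ
      linarith
  have hle : μ _ ≤ ∑ j, μ (A j ∪ B j) :=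
    (measure_mono hincl).trans (measure_iUnion_fintype_le _ _)
  have hsum_ne : (∑ j, μ (A j ∪ B j)) ≠ ⊤ :=
    (ENNReal.sum_lt_top.mpr fun j _ => measure_lt_top μ _).ne
  calc (μ _).toReal ≤ (∑ j, μ (A j ∪ B j)).toReal := ENNReal.toReal_mono hsum_ne hle
    _ = ∑ j, (μ (A j ∪ B j)).toReal := ENNReal.toReal_sum fun j _ => measure_ne_top μ _
    _ ≤ ∑ j, ((μ (A j)).toReal + (μ (B j)).toReal) := by
        refine Finset.sum_le_sum fun j _ => ?_
        calc (μ (A j ∪ B j)).toReal ≤ (μ (A j) + μ (B j)).toReal :=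
              ENNReal.toReal_mono (by finiteness) (measure_union_le _ _)
          _ = (μ (A j)).toReal + (μ (B j)).toReal :=
              ENNReal.toReal_add (measure_ne_top μ _) (measure_ne_top μ _)
    _ = ∑ j : Fin d, ((α - α') / d + if θ j = 0 then 0 else α' / s) := by
        simp only [hmuA, hmuB]
    _ = d * ((α - α') / d) + ∑ j : Fin d, (if θ j = 0 then 0 else α' / s) := by
        rw [Finset.sum_add_distrib, Finset.sum_const, Finset.card_univ, Fintype.card_fin,
          nsmul_eq_mul]
    _ ≤ (α - α') + α' := by
        have h1 : (d : ℝ) * ((α - α') / d) = α - α' := by field_simp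
        have h2 : ∑ j : Fin d, (if θ j = 0 then 0 else α' / s)
            = ((Finset.univ.filter (fun j => θ j ≠ 0)).card : ℝ) * (α' / s) := by
          have he : ∀ j, (if θ j = 0 then (0:ℝ) else α' / s)
              = if θ j ≠ 0 then α' / s else 0 := fun j => by
            by_cases h : θ j = 0 <;> simp [h]
          simp_rw [he]
          rw [← Finset.sum_filter, Finset.sum_const, nsmul_eq_mul]
        have h3 : ((Finset.univ.filter (fun j => θ j ≠ 0)).card : ℝ) ≤ (s:ℝ) := by
          exact_mod_cast hsupp
        have h4 : ((Finset.univ.filter (fun j => θ j ≠ 0)).card : ℝ) * (α' / s)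
            ≤ (s:ℝ) * (α' / s) :=
          mul_le_mul_of_nonneg_right h3 (le_of_lt (div_pos hα'0 hs0))
        have h5 : (s:ℝ) * (α' / s) = α' := by field_simp
        rw [h1, h2]
        linarith
    _ = α := by ring
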